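/- Let K be a field, q ∈ K nonzero, and let a weighted graph on vertices {1,…,n} have symmetric weights a_{ij} ∈ K such that for some m with 0 ≤ m ≤ n one has a_{ij} = 0 whenever both i,j ≤ m and whenever both i,j > m (i.e. the graph is bipartite with the two parts numbered consecutively, all vertices of one part having smaller indices than all vertices of the other part). Let S be the upper triangular matrix with 1's on the diagonal and −a_{ij} in position (i,j) for i < j, and let A be the weight matrix (A_{ij} = a_{ij} for i ≠ j, A_{ii} = 0). Then det(q·S + q⁻¹·Sᵀ) = det((q + q⁻¹)·I − A). -/

import Mathlib

open Matrix Finset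

/-- For a bipartite weighted graph whose two parts are numbered consecutively
(the first part consisting of the vertices with index `< m` and the second of the
vertices with index `≥ m`, with no edges inside either part), the Coxeter polynomial
`det (q • S + q⁻¹ • Sᵀ)` coincides with the characteristic polynomial
`det (z • I - A)` of the weight matrix `A` evaluated at `z = q + q⁻¹`. -/
theorem coxeter_eq_charpoly_of_bipartite {K : Type*} [Field K] (n : ℕ)
    (a : Fin n → Fin n → K) (hsym : ∀ i j, a i j = a j i)
    (q : K) (hq : q ≠ 0)
    (m : ℕ) (hm : m ≤ n)
    (hbip : ∀ i j : Fin n, i ≠ j →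
      ((i.val < m ∧ j.val < m) ∨ (m ≤ i.val ∧ m ≤ j.val)) → a i j = 0)
    (S : Matrix (Fin n) (Fin n) K)
    (hS : ∀ i j, S i j = if i = j then 1 else if i < j then -a i j else 0)
    (A : Matrix (Fin n) (Fin n) K)
    (hA : ∀ i j, A i j = if i = j then 0 else a i j) :
    (q • S + q⁻¹ • Sᵀ).det = ((q + q⁻¹) • (1 : Matrix (Fin n) (Fin n) K) - A).det := by
  set d : Fin n → K := fun i => if i.val < m then q else 1 with hd
  have hdne : ∀ i, d i ≠ 0 := by
    intro i; simp only [hd]; split <;> simp [hq]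
  have key : (q • S + q⁻¹ • Sᵀ) * Matrix.diagonal d
      = Matrix.diagonal d * ((q + q⁻¹) • (1 : Matrix (Fin n) (Fin n) K) - A) := by
    ext i j
    rw [Matrix.mul_diagonal, Matrix.diagonal_mul]
    simp only [Matrix.add_apply, Matrix.smul_apply, Matrix.sub_apply, Matrix.one_apply,
      Matrix.transpose_apply, hS, hA, smul_eq_mul, hd]
    by_cases hij : i = j
    · subst hij; simp; ring
    · have hji : j ≠ i := Ne.symm hij
      have hvij : i.val ≠ j.val := fun h => hij (Fin.ext h)
      rcases lt_or_gt_of_ne hij with h | h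
      · have hv : i.val < j.val := h
        by_cases hi : i.val < m <;> by_cases hj : j.val < m
        · have h0 : a i j = 0 := hbip i j hij (Or.inl ⟨hi, hj⟩)
          simp [hij, hji, h, asymm h, hi, hj, h0]
        · simp [hij, hji, h, asymm h, hi, hj]
        · omega
        · have h0 : a i j = 0 := hbip i j hij (Or.inr ⟨le_of_not_gt hi, le_of_not_gt hj⟩)
          simp [hij, hji, h, asymm h, hi, hj, h0]
      · have hv : j.val < i.val := h
        by_cases hi : i.val < m <;> by_cases hj : j.val < m
        · have h0 : a i j = 0 := hbip i j hij (Or.inl ⟨hi, hj⟩)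
          simp [hij, hji, h, asymm h, hi, hj, h0, hsym j i, hsym i j]
        · omega
        · have hs : a j i = a i j := hsym j i
          simp only [if_neg hij, if_neg hji, if_pos h, if_neg (asymm h), if_neg hi, if_pos hj,
            if_neg hi, hs]
          field_simp
          ring
        · have h0 : a i j = 0 := hbip i j hij (Or.inr ⟨le_of_not_gt hi, le_of_not_gt hj⟩)
          simp [hij, hji, h, asymm h, hi, hj, h0, hsym j i]
  have hdet := congrArg Matrix.det key
  rw [Matrix.det_mul, Matrix.det_mul, Matrix.det_diagonal] at hdet
  have hprod : (∏ i, d i) ≠ 0 := Finset.prod_ne_zero_iff.mpr fun i _ => hdne i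
  rw [mul_comm] at hdet
  exact mul_left_cancel₀ hprod hdet
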